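/- Let F be a field of characteristic different from 2 and n, m ≥ 1. For A ∈ SO_n(F) and B ∈ SO_m(F), one has A ⊗ B = I_{nm} if and only if either (A, B) = (I_n, I_m), or n and m are both even and (A, B) = (−I_n, −I_m). In other words, the kernel of the Kronecker tensor product map ρ_SO : SO_n(F) × SO_m(F) → SO_{nm}(F) is {(I,I)} when n or m is odd, and {(I,I), (−I,−I)} when n and m are both even. -/

import Mathlib

open Matrix

/-- The `d × d` exchange matrix `Ω_d`: entry 1 exactly when (1-based) `i + j = d + 1`. -/
def omegaMat (F : Type*) [CommRing F] (d : ℕ) : Matrix (Fin d) (Fin d) F :=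
  fun i j => if (i : ℕ) + (j : ℕ) + 1 = d then 1 else 0

/-- `SO_d(F)`: the set of `d × d` matrices with `A · Ω_d · Aᵀ = Ω_d` and `det A = 1`. -/
def SOset (F : Type*) [CommRing F] (d : ℕ) : Set (Matrix (Fin d) (Fin d) F) :=
  {A | A * omegaMat F d * Aᵀ = omegaMat F d ∧ A.det = 1}

/-- `Ψ_{2n} = [[0, Ω_n], [−Ω_n, 0]]`. -/
def PsiMat (F : Type*) [CommRing F] (n : ℕ) : Matrix (Fin (2*n)) (Fin (2*n)) F :=
  fun i j => if (i : ℕ) + (j : ℕ) + 1 = 2*n then (if (i : ℕ) < n then 1 else -1) else 0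

/-- `Sp_{2n}(F)`: the set of `2n × 2n` matrices with `A · Ψ_{2n} · Aᵀ = Ψ_{2n}`. -/
def SpSet (F : Type*) [CommRing F] (n : ℕ) : Set (Matrix (Fin (2*n)) (Fin (2*n)) F) :=
  {A | A * PsiMat F n * Aᵀ = PsiMat F n}

/-- Kronecker product, regarded as an `(nm) × (nm)` matrix via the lexicographic
identification sending the (1-based) pair `(i,k)` to `m(i−1)+k`. -/
def kron {F : Type*} [CommRing F] {n m : ℕ} (A : Matrix (Fin n) (Fin n) F)
    (B : Matrix (Fin m) (Fin m) F) : Matrix (Fin (n*m)) (Fin (n*m)) F :=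
  Matrix.reindex finProdFinEquiv finProdFinEquiv (Matrix.kroneckerMap (· * ·) A B)

/-- 1-based matrix unit `E_{i,j}` in `M_d(F)`. -/
def Eunit (F : Type*) [CommRing F] (d : ℕ) (i j : ℕ) : Matrix (Fin d) (Fin d) F :=
  fun p q => if (p : ℕ) + 1 = i ∧ (q : ℕ) + 1 = j then 1 else 0

/-- over a field of characteristic ≠ 2, the kernel of the Kronecker tensor
product map `ρ_SO : SO_n(F) × SO_m(F) → SO_{nm}(F)` is `{(I,I)}` when `n` or `m` is odd,
and `{(I,I), (−I,−I)}` when `n` and `m` are both even. -/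
theorem kron_so_eq_one_iff (F : Type*) [Field F] (hchar : ringChar F ≠ 2)
    (n m : ℕ) (hn : 1 ≤ n) (hm : 1 ≤ m)
    (A : Matrix (Fin n) (Fin n) F) (B : Matrix (Fin m) (Fin m) F)
    (hA : A ∈ SOset F n) (hB : B ∈ SOset F m) :
    kron A B = 1 ↔ (A = 1 ∧ B = 1) ∨ (Even n ∧ Even m ∧ A = -1 ∧ B = -1) := by
  have h2 : (2 : F) ≠ 0 := Ring.two_ne_zero hchar
  have hne : (-1 : F) ≠ 1 := by
    intro h; apply h2; linear_combination -h
  constructor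
  · intro h
    unfold kron at h
    have hK : Matrix.kroneckerMap (· * ·) A B = 1 := by
      have := congrArg (Matrix.reindex finProdFinEquiv.symm finProdFinEquiv.symm) h
      simpa using this
    have hent : ∀ (i j : Fin n) (k l : Fin m),
        A i j * B k l = if i = j ∧ k = l then (1:F) else 0 := by
      intro i j k l
      have := congrFun (congrFun hK (i, k)) (j, l)
      simpa [Matrix.kroneckerMap_apply, Matrix.one_apply, Prod.ext_iff] using this
    set i0 : Fin n := ⟨0, hn⟩ with hi0
    set k0 : Fin m := ⟨0, hm⟩ with hk0
    set u := A i0 i0 with hu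
    set v := B k0 k0 with hv
    have huv : u * v = 1 := by simpa using hent i0 i0 k0 k0
    have hvne : v ≠ 0 := right_ne_zero_of_mul_eq_one huv
    have hune : u ≠ 0 := left_ne_zero_of_mul_eq_one huv
    have hAe : A = u • (1 : Matrix (Fin n) (Fin n) F) := by
      ext i j
      have h1 := hent i j k0 k0
      by_cases hij : i = j
      · subst hij
        simp only [and_true, if_pos rfl, if_true] at h1
        have h3 : A i i * v = u * v := by rw [h1, huv]
        have := mul_right_cancel₀ hvne h3
        simp [this, Matrix.one_apply]
      · simp only [hij, false_and, if_false] at h1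
        rcases mul_eq_zero.mp h1 with h' | h'
        · simp [h', Matrix.one_apply, hij]
        · exact absurd h' hvne
    have hBe : B = v • (1 : Matrix (Fin m) (Fin m) F) := by
      ext k l
      have h1 := hent i0 i0 k l
      by_cases hkl : k = l
      · subst hkl
        simp only [true_and, if_pos rfl, if_true] at h1
        have h3 : u * B k k = u * v := by rw [h1, huv]
        have := mul_left_cancel₀ hune h3
        simp [this, Matrix.one_apply]
      · simp only [hkl, and_false, if_false] at h1
        rcases mul_eq_zero.mp h1 with h' | h'
        · exact absurd h' hune
        · simp [h', Matrix.one_apply, hkl]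
    have hOmega := hA.1
    rw [hAe] at hOmega
    have hsq : u * u = 1 := by
      have := congrFun (congrFun hOmega i0) ⟨n-1, by omega⟩
      simp [omegaMat, Matrix.smul_mul, Matrix.mul_smul, Matrix.transpose_smul,
        Matrix.smul_apply, smul_eq_mul] at this
      have hidx : n - 1 + 1 = n := by omega
      simpa [hidx, show (i0 : ℕ) = 0 from rfl] using this
    have hcases : u = 1 ∨ u = -1 := by
      rcases mul_eq_zero.mp (show (u - 1) * (u + 1) = 0 by ring_nf; linear_combination hsq) with h' | h'
      · left; linear_combination h'
      · right; linear_combination h'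
    rcases hcases with h' | h'
    · left
      have hv1 : v = 1 := by
        rw [h'] at huv; linear_combination huv
      constructor
      · rw [hAe, h', one_smul]
      · rw [hBe, hv1, one_smul]
    · right
      have hv1 : v = -1 := by
        rw [h'] at huv; linear_combination -huv
      have hA1 : A = -1 := by rw [hAe, h', neg_smul, one_smul]
      have hB1 : B = -1 := by rw [hBe, hv1, neg_smul, one_smul]
      have hdetA : ((-1 : F)) ^ n = 1 := by
        have := hA.2
        rw [hA1] at this
        simpa [Matrix.det_neg] using this
      have hdetB : ((-1 : F)) ^ m = 1 := by
        have := hB.2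
        rw [hB1] at this
        simpa [Matrix.det_neg] using this
      exact ⟨(neg_one_pow_eq_one_iff_even hne).mp hdetA,
        (neg_one_pow_eq_one_iff_even hne).mp hdetB, hA1, hB1⟩
  · rintro (⟨rfl, rfl⟩ | ⟨_, _, rfl, rfl⟩)
    · unfold kron
      rw [show Matrix.kroneckerMap (· * ·) (1 : Matrix (Fin n) (Fin n) F) (1 : Matrix (Fin m) (Fin m) F) = 1 from Matrix.one_kronecker_one]
      simp
    · unfold kron
      have : Matrix.kroneckerMap (· * ·) (-1 : Matrix (Fin n) (Fin n) F) (-1 : Matrix (Fin m) (Fin m) F) = 1 := by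
        ext ⟨i, k⟩ ⟨j, l⟩
        simp [Matrix.kroneckerMap_apply, Matrix.one_apply, Prod.ext_iff]
        by_cases hij : i = j <;> by_cases hkl : k = l <;> simp [hij, hkl]
      rw [this]; simp
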